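/- arXiv:1709.08791 — 4 statements merged into one kernel-verified Lean document; each statement's English description precedes it below -/
import Mathlib

section
/- In any optimal solution of the two-resource proportional fairness problem max Σ_{u∈U} ln(R_{u,1} θ_u + R_{u,2} γ_u) subject to θ_u, γ_u ≥ 0, Σ_u θ_u ≤ 1, Σ_u γ_u ≤ 1, at most one user u can have both θ_u > 0 and γ_u > 0, provided the ratios R_{u,1}/R_{u,2} are pairwise distinct across users. -/
theorem at_most_one_dual_user {ι : Type*} [Fintype ι]
    (hcard : 2 ≤ Fintype.card ι)
    (R1 R2 : ι → ℝ) (hR1 : ∀ u, 0 < R1 u) (hR2 : ∀ u, 0 < R2 u)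
    (hdist : ∀ u v : ι, u ≠ v → R1 u / R2 u ≠ R1 v / R2 v)
    (θ γ : ι → ℝ)
    (hθ : ∀ u, 0 ≤ θ u) (hγ : ∀ u, 0 ≤ γ u)
    (hθs : (∑ u, θ u) ≤ 1) (hγs : (∑ u, γ u) ≤ 1)
    (hpos : ∀ u, 0 < R1 u * θ u + R2 u * γ u)
    (hopt : ∀ θ' γ' : ι → ℝ, (∀ u, 0 ≤ θ' u) → (∀ u, 0 ≤ γ' u) →
      (∑ u, θ' u) ≤ 1 → (∑ u, γ' u) ≤ 1 →
      (∀ u, 0 < R1 u * θ' u + R2 u * γ' u) →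
      (∑ u, Real.log (R1 u * θ' u + R2 u * γ' u)) ≤
        ∑ u, Real.log (R1 u * θ u + R2 u * γ u)) :
    ∀ u v : ι, u ≠ v → ¬(0 < θ u ∧ 0 < γ u ∧ 0 < θ v ∧ 0 < γ v) := by
  classical
  intro u v huv
  rintro ⟨hθu, hγu, hθv, hγv⟩
  set D : ℝ := R1 u * R2 v - R2 u * R1 v with hD
  have h2u := (hR2 u).ne'
  have h2v := (hR2 v).ne'
  have hDne : D ≠ 0 := by
    intro h
    apply hdist u v huv
    rw [div_eq_div_iff h2u h2v]
    nlinarith [h]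
  have hDabs : 0 < |D| := abs_pos.mpr hDne
  set m : ℝ := min (min (θ u) (θ v)) (min (γ u) (γ v)) with hmdef
  have hm : 0 < m := by
    simp only [hmdef, lt_min_iff]
    exact ⟨⟨hθu, hθv⟩, hγu, hγv⟩
  have hmθu : m ≤ θ u := le_trans (min_le_left _ _) (min_le_left _ _)
  have hmθv : m ≤ θ v := le_trans (min_le_left _ _) (min_le_right _ _)
  have hmγu : m ≤ γ u := le_trans (min_le_right _ _) (min_le_left _ _)
  have hmγv : m ≤ γ v := le_trans (min_le_right _ _) (min_le_right _ _)
  set S : ℝ := R1 u + R1 v + R2 u + R2 v with hS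
  have hSpos : 0 < S := by
    have := hR1 u; have := hR1 v; have := hR2 u; have := hR2 v
    simp only [hS]; linarith
  set t : ℝ := m * |D| / S with ht
  have htpos : 0 < t := div_pos (mul_pos hm hDabs) hSpos
  set ε : ℝ := -t * (R2 u + R2 v) / D with hε
  set δ : ℝ := -t * (R1 u + R1 v) / D with hδ
  have hR2uv : 0 < R2 u + R2 v := by have := hR2 u; have := hR2 v; linarith
  have hR1uv : 0 < R1 u + R1 v := by have := hR1 u; have := hR1 v; linarith
  have hεbound : |ε| ≤ m := by
    have h1 : |ε| = t * (R2 u + R2 v) / |D| := by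
      rw [hε, abs_div, abs_mul, abs_neg, abs_of_pos htpos, abs_of_pos hR2uv]
    rw [h1, ht]
    rw [div_le_iff₀ hDabs]
    rw [div_mul_eq_mul_div, div_le_iff₀ hSpos]
    have hle : R2 u + R2 v ≤ S := by
      have := hR1 u; have := hR1 v; simp only [hS]; linarith
    nlinarith [mul_le_mul_of_nonneg_left hle (le_of_lt (mul_pos hm hDabs))]
  have hδbound : |δ| ≤ m := by
    have h1 : |δ| = t * (R1 u + R1 v) / |D| := by
      rw [hδ, abs_div, abs_mul, abs_neg, abs_of_pos htpos, abs_of_pos hR1uv]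
    rw [h1, ht]
    rw [div_le_iff₀ hDabs]
    rw [div_mul_eq_mul_div, div_le_iff₀ hSpos]
    have hle : R1 u + R1 v ≤ S := by
      have := hR2 u; have := hR2 v; simp only [hS]; linarith
    nlinarith [mul_le_mul_of_nonneg_left hle (le_of_lt (mul_pos hm hDabs))]
  have hεabs := abs_le.mp hεbound
  have hδabs := abs_le.mp hδbound
  have key1 : -(R1 u) * ε + R2 u * δ = t := by
    rw [hε, hδ]
    field_simp
    ring
  have key2 : R1 v * ε - R2 v * δ = t := by
    rw [hε, hδ]
    field_simp
    ring
  set θ' : ι → ℝ := fun w => θ w + (if w = u then -ε else 0) + (if w = v then ε else 0)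
    with hθ'
  set γ' : ι → ℝ := fun w => γ w + (if w = u then δ else 0) + (if w = v then -δ else 0)
    with hγ'
  have hθ'nn : ∀ w, 0 ≤ θ' w := by
    intro w
    simp only [hθ']
    by_cases h1 : w = u
    · subst h1
      simp [huv]
      linarith [hεabs.2]
    · by_cases h2 : w = v
      · subst h2
        simp [h1]
        linarith [hεabs.1]
      · simp [h1, h2]
        exact hθ w
  have hγ'nn : ∀ w, 0 ≤ γ' w := by
    intro w
    simp only [hγ']
    by_cases h1 : w = u
    · subst h1
      simp [huv]
      linarith [hδabs.1]
    · by_cases h2 : w = v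
      · subst h2
        simp [h1]
        linarith [hδabs.2]
      · simp [h1, h2]
        exact hγ w
  have hθ's : ∑ w, θ' w = ∑ w, θ w := by
    simp only [hθ']
    rw [Finset.sum_add_distrib, Finset.sum_add_distrib]
    simp [Finset.sum_ite_eq']
  have hγ's : ∑ w, γ' w = ∑ w, γ w := by
    simp only [hγ']
    rw [Finset.sum_add_distrib, Finset.sum_add_distrib]
    simp [Finset.sum_ite_eq']
  have hval : ∀ w, R1 w * θ' w + R2 w * γ' w =
      (R1 w * θ w + R2 w * γ w) + (if w = u then t else 0) + (if w = v then t else 0) := by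
    intro w
    simp only [hθ', hγ']
    by_cases h1 : w = u
    · subst h1
      simp [huv]
      linarith [key1]
    · by_cases h2 : w = v
      · subst h2
        simp [h1]
        linarith [key2]
      · simp [h1, h2]
  have hpos' : ∀ w, 0 < R1 w * θ' w + R2 w * γ' w := by
    intro w
    rw [hval w]
    by_cases h1 : w = u
    · subst h1
      simp [huv]
      linarith [hpos w, htpos]
    · by_cases h2 : w = v
      · subst h2
        simp [h1]
        linarith [hpos w, htpos]
      · simp [h1, h2]
        exact hpos w
  have hle : ∀ w ∈ Finset.univ, Real.log (R1 w * θ w + R2 w * γ w) ≤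
      Real.log (R1 w * θ' w + R2 w * γ' w) := by
    intro w _
    rw [hval w]
    by_cases h1 : w = u
    · subst h1
      simp [huv]
      exact le_of_lt (Real.log_lt_log (hpos _) (by linarith))
    · by_cases h2 : w = v
      · subst h2
        simp [h1]
        exact le_of_lt (Real.log_lt_log (hpos _) (by linarith))
      · simp [h1, h2]
  have hstrict : Real.log (R1 u * θ u + R2 u * γ u) <
      Real.log (R1 u * θ' u + R2 u * γ' u) := by
    rw [hval u]
    simp [huv]
    exact Real.log_lt_log (hpos u) (by linarith)
  have hsumlt : ∑ w, Real.log (R1 w * θ w + R2 w * γ w) <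
      ∑ w, Real.log (R1 w * θ' w + R2 w * γ' w) :=
    Finset.sum_lt_sum hle ⟨u, Finset.mem_univ u, hstrict⟩
  have := hopt θ' γ' hθ'nn hγ'nn (by rw [hθ's]; exact hθs) (by rw [hγ's]; exact hγs) hpos'
  linarith
end

section
/- In the two-resource proportional fairness problem, if (θ, γ) is optimal and user u has θ_u = 0 < γ_u while user v has γ_v = 0 < θ_v, then R_{u,1}/R_{u,2} ≤ R_{v,1}/R_{v,2}. -/
lemma sum_two_congr {ι : Type*} [Fintype ι] [DecidableEq ι] {u v : ι} (huv : u ≠ v) (f g : ι → ℝ)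
    (h : ∀ w, w ≠ u → w ≠ v → f w = g w) (hsum : f u + f v = g u + g v) :
    ∑ w, f w = ∑ w, g w := by
  rw [← Finset.sum_compl_add_sum ({u, v} : Finset ι) f,
      ← Finset.sum_compl_add_sum ({u, v} : Finset ι) g,
      Finset.sum_pair huv, Finset.sum_pair huv, hsum]
  congr 1
  apply Finset.sum_congr rfl
  intro w hw
  simp only [Finset.mem_compl, Finset.mem_insert, Finset.mem_singleton, not_or] at hw
  exact h w hw.1 hw.2

lemma sum_two_lt {ι : Type*} [Fintype ι] [DecidableEq ι] {u v : ι} (huv : u ≠ v) (f g : ι → ℝ)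
    (h : ∀ w, w ≠ u → w ≠ v → f w = g w) (hu : f u < g u) (hv : f v = g v) :
    ∑ w, f w < ∑ w, g w := by
  rw [← Finset.sum_compl_add_sum ({u, v} : Finset ι) f,
      ← Finset.sum_compl_add_sum ({u, v} : Finset ι) g,
      Finset.sum_pair huv, Finset.sum_pair huv]
  have : ∑ w ∈ ({u, v} : Finset ι)ᶜ, f w = ∑ w ∈ ({u, v} : Finset ι)ᶜ, g w := by
    apply Finset.sum_congr rfl
    intro w hw
    simp only [Finset.mem_compl, Finset.mem_insert, Finset.mem_singleton, not_or] at hw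
    exact h w hw.1 hw.2
  rw [this, hv]
  linarith

theorem ratio_ordering_at_optimum {ι : Type*} [Fintype ι]
    (R1 R2 : ι → ℝ) (hR1 : ∀ u, 0 < R1 u) (hR2 : ∀ u, 0 < R2 u)
    (θ γ : ι → ℝ)
    (hθ : ∀ u, 0 ≤ θ u) (hγ : ∀ u, 0 ≤ γ u)
    (hθs : (∑ u, θ u) ≤ 1) (hγs : (∑ u, γ u) ≤ 1)
    (hpos : ∀ u, 0 < R1 u * θ u + R2 u * γ u)
    (hopt : ∀ θ' γ' : ι → ℝ, (∀ u, 0 ≤ θ' u) → (∀ u, 0 ≤ γ' u) →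
      (∑ u, θ' u) ≤ 1 → (∑ u, γ' u) ≤ 1 →
      (∀ u, 0 < R1 u * θ' u + R2 u * γ' u) →
      (∑ u, Real.log (R1 u * θ' u + R2 u * γ' u)) ≤
        ∑ u, Real.log (R1 u * θ u + R2 u * γ u))
    (u v : ι) (huθ : θ u = 0) (huγ : 0 < γ u) (hvγ : γ v = 0) (hvθ : 0 < θ v) :
    R1 u / R2 u ≤ R1 v / R2 v := by
  classical
  by_contra hcon
  push_neg at hcon
  have hkey : R1 v * R2 u < R1 u * R2 v := by
    rw [div_lt_div_iff₀ (hR2 v) (hR2 u)] at hcon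
    linarith
  have huv : u ≠ v := by
    intro h; rw [h] at huθ; exact absurd huθ (ne_of_gt hvθ)
  set ε : ℝ := min (θ v / R2 v) (γ u / R1 v) with hε
  have hεpos : 0 < ε := lt_min (div_pos hvθ (hR2 v)) (div_pos huγ (hR1 v))
  have hεθ : ε * R2 v ≤ θ v := by
    have := min_le_left (θ v / R2 v) (γ u / R1 v)
    rw [le_div_iff₀ (hR2 v)] at this
    exact this
  have hεγ : ε * R1 v ≤ γ u := by
    have := min_le_right (θ v / R2 v) (γ u / R1 v)
    rw [le_div_iff₀ (hR1 v)] at this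
    exact this
  set θ' : ι → ℝ := fun w => if w = u then ε * R2 v else if w = v then θ v - ε * R2 v else θ w with hθ'
  set γ' : ι → ℝ := fun w => if w = u then γ u - ε * R1 v else if w = v then ε * R1 v else γ w with hγ'
  have hθ'u : θ' u = ε * R2 v := by simp [hθ']
  have hθ'v : θ' v = θ v - ε * R2 v := by simp [hθ', huv.symm]
  have hγ'u : γ' u = γ u - ε * R1 v := by simp [hγ']
  have hγ'v : γ' v = ε * R1 v := by simp [hγ', huv.symm]
  have hθ'w : ∀ w, w ≠ u → w ≠ v → θ' w = θ w := by
    intro w h1 h2; simp [hθ', h1, h2]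
  have hγ'w : ∀ w, w ≠ u → w ≠ v → γ' w = γ w := by
    intro w h1 h2; simp [hγ', h1, h2]
  have hθ'nn : ∀ w, 0 ≤ θ' w := by
    intro w
    by_cases h1 : w = u
    · rw [h1, hθ'u]; exact mul_nonneg hεpos.le (hR2 v).le
    by_cases h2 : w = v
    · rw [h2, hθ'v]; linarith
    · rw [hθ'w w h1 h2]; exact hθ w
  have hγ'nn : ∀ w, 0 ≤ γ' w := by
    intro w
    by_cases h1 : w = u
    · rw [h1, hγ'u]; linarith
    by_cases h2 : w = v
    · rw [h2, hγ'v]; exact mul_nonneg hεpos.le (hR1 v).le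
    · rw [hγ'w w h1 h2]; exact hγ w
  have hθ'sum : ∑ w, θ' w = ∑ w, θ w := by
    apply sum_two_congr huv _ _ hθ'w
    rw [hθ'u, hθ'v, huθ]; ring
  have hγ'sum : ∑ w, γ' w = ∑ w, γ w := by
    apply sum_two_congr huv _ _ hγ'w
    rw [hγ'u, hγ'v, hvγ]; ring
  have hrv : R1 v * θ' v + R2 v * γ' v = R1 v * θ v + R2 v * γ v := by
    rw [hθ'v, hγ'v, hvγ]; ring
  have hru : R1 u * θ u + R2 u * γ u < R1 u * θ' u + R2 u * γ' u := by
    rw [hθ'u, hγ'u, huθ]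
    nlinarith [hεpos, hkey]
  have hrw : ∀ w, w ≠ u → w ≠ v → R1 w * θ' w + R2 w * γ' w = R1 w * θ w + R2 w * γ w := by
    intro w h1 h2; rw [hθ'w w h1 h2, hγ'w w h1 h2]
  have hpos' : ∀ w, 0 < R1 w * θ' w + R2 w * γ' w := by
    intro w
    by_cases h1 : w = u
    · rw [h1]; exact lt_trans (hpos u) hru
    by_cases h2 : w = v
    · rw [h2, hrv]; exact hpos v
    · rw [hrw w h1 h2]; exact hpos w
  have hle := hopt θ' γ' hθ'nn hγ'nn (hθ'sum ▸ hθs) (hγ'sum ▸ hγs) hpos'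
  have hlt : ∑ w, Real.log (R1 w * θ w + R2 w * γ w)
      < ∑ w, Real.log (R1 w * θ' w + R2 w * γ' w) := by
    apply sum_two_lt huv
    · intro w h1 h2; rw [hrw w h1 h2]
    · exact Real.log_lt_log (hpos u) hru
    · rw [hrv]
  linarith
end

section
/- Slack ordering for weighted sum rate: in the LP of maximizing Σ_u w_u(R_{u,1}θ_u + R_{u,2}γ_u) with budgets Σθ_u ≤ Γ, Σγ_u ≤ Γ₂ and rate bounds R_u := R_{u,1}θ_u + R_{u,2}γ_u ∈ [r_u^min, r_u^max], any optimal solution satisfies: for distinct users k, j with w_k R_{k,2} > w_j R_{j,2}, if R_j > r_j^min and γ_j > 0, then R_k = r_k^max. -/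
theorem wsr_slack_ordering {ι : Type*} [Fintype ι]
    (w R1 R2 rmin rmax : ι → ℝ)
    (hw : ∀ u, 0 < w u) (hR1 : ∀ u, 0 < R1 u) (hR2 : ∀ u, 0 < R2 u)
    (hr : ∀ u, 0 ≤ rmin u ∧ rmin u ≤ rmax u)
    (Γ Γ₂ : ℝ) (hΓ : 0 ≤ Γ) (hΓ₂ : 0 ≤ Γ₂)
    (θ γ : ι → ℝ)
    (hθ : ∀ u, 0 ≤ θ u) (hγ : ∀ u, 0 ≤ γ u)
    (hθs : (∑ u, θ u) ≤ Γ) (hγs : (∑ u, γ u) ≤ Γ₂)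
    (hrate : ∀ u, R1 u * θ u + R2 u * γ u ∈ Set.Icc (rmin u) (rmax u))
    (hopt : ∀ θ' γ' : ι → ℝ, (∀ u, 0 ≤ θ' u) → (∀ u, 0 ≤ γ' u) →
      (∑ u, θ' u) ≤ Γ → (∑ u, γ' u) ≤ Γ₂ →
      (∀ u, R1 u * θ' u + R2 u * γ' u ∈ Set.Icc (rmin u) (rmax u)) →
      (∑ u, w u * (R1 u * θ' u + R2 u * γ' u)) ≤
        ∑ u, w u * (R1 u * θ u + R2 u * γ u)) :
    ∀ k j : ι, k ≠ j → w k * R2 k > w j * R2 j →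
      rmin j < R1 j * θ j + R2 j * γ j → 0 < γ j →
      R1 k * θ k + R2 k * γ k = rmax k := by
  classical
  intro k j hkj hwR hslack hγj
  by_contra hne
  have hk := hrate k
  have hj := hrate j
  have hlt : R1 k * θ k + R2 k * γ k < rmax k := lt_of_le_of_ne hk.2 hne
  set ε := min (γ j) (min ((R1 j * θ j + R2 j * γ j - rmin j) / R2 j)
      ((rmax k - (R1 k * θ k + R2 k * γ k)) / R2 k)) with hεdef
  have hεpos : 0 < ε := by
    refine lt_min hγj (lt_min ?_ ?_)
    · exact div_pos (by linarith) (hR2 j)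
    · exact div_pos (by linarith) (hR2 k)
  have hε1 : ε ≤ γ j := min_le_left _ _
  have hε2 : ε * R2 j ≤ R1 j * θ j + R2 j * γ j - rmin j :=
    (le_div_iff₀ (hR2 j)).1 (le_trans (min_le_right _ _) (min_le_left _ _))
  have hε3 : ε * R2 k ≤ rmax k - (R1 k * θ k + R2 k * γ k) :=
    (le_div_iff₀ (hR2 k)).1 (le_trans (min_le_right _ _) (min_le_right _ _))
  set γ' : ι → ℝ := fun u => γ u + (if u = k then ε else 0) - (if u = j then ε else 0)
    with hγ'def
  have hγ'nn : ∀ u, 0 ≤ γ' u := by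
    intro u
    by_cases h1 : u = k
    · subst h1
      simp only [hγ'def, ite_true]
      rw [if_neg hkj]
      have := hγ u
      linarith
    · by_cases h2 : u = j
      · subst h2
        simp only [hγ'def, ite_true]
        rw [if_neg h1]
        linarith
      · simp only [hγ'def]
        rw [if_neg h1, if_neg h2]
        have := hγ u
        linarith
  have hγ's : (∑ u, γ' u) ≤ Γ₂ := by
    have : (∑ u, γ' u) = ∑ u, γ u := by
      simp [hγ'def, Finset.sum_add_distrib, Finset.sum_sub_distrib,
        Finset.sum_ite_eq']
    linarith
  have hrate' : ∀ u, R1 u * θ u + R2 u * γ' u ∈ Set.Icc (rmin u) (rmax u) := by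
    intro u
    by_cases h1 : u = k
    · subst h1
      simp only [hγ'def, ite_true]
      rw [if_neg hkj]
      constructor
      · have := hk.1
        nlinarith [hR2 u, hεpos]
      · nlinarith [hε3]
    · by_cases h2 : u = j
      · subst h2
        simp only [hγ'def, ite_true]
        rw [if_neg h1]
        constructor
        · nlinarith [hε2]
        · have := hj.2
          nlinarith [hR2 u, hεpos]
      · have := hrate u
        simp only [hγ'def]
        rw [if_neg h1, if_neg h2]
        simpa using this
  have hobj : (∑ u, w u * (R1 u * θ u + R2 u * γ' u))
      = (∑ u, w u * (R1 u * θ u + R2 u * γ u)) + w k * R2 k * ε - w j * R2 j * ε := by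
    have key : ∀ u, w u * (R1 u * θ u + R2 u * γ' u)
        = w u * (R1 u * θ u + R2 u * γ u) + (if u = k then w k * R2 k * ε else 0)
          - (if u = j then w j * R2 j * ε else 0) := by
      intro u
      by_cases h1 : u = k <;> by_cases h2 : u = j
      · exact absurd (h1.symm.trans h2) hkj
      · subst h1
        simp only [hγ'def, ite_true]
        rw [if_neg hkj, if_neg hkj]
        ring
      · subst h2
        simp only [hγ'def, ite_true]
        rw [if_neg h1, if_neg h1]
        ring
      · simp only [hγ'def]
        rw [if_neg h1, if_neg h1, if_neg h2, if_neg h2]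
        ring
    rw [Finset.sum_congr rfl fun u _ => key u]
    simp [Finset.sum_add_distrib, Finset.sum_sub_distrib, Finset.sum_ite_eq']
  have := hopt θ γ' hθ hγ'nn hθs hγ's hrate'
  rw [hobj] at this
  nlinarith [hεpos, hwR]
end

section
/- If in the proportional fairness problem max Σ_{u∈U'} Σ_{b} x_{u,b} ln(R_{u,1}θ_u + R_{u,b}γ_{u,b}) (with one macro and pico set B', macro budget Σ_u θ_u ≤ 1, per-pico budgets Σ_{u: x_{u,b}=1} γ_{u,b} ≤ 1) every optimal solution has, for each pico b, at most one user served by both macro and pico b, then restricting to orthogonal solutions (θ_u γ_{u,b} = 0 for all u, b) loses at most min(|B'|, |U'|)·ln 2 in objective value. -/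
theorem orthogonal_split_loss {ι β : Type*} [Fintype ι] [Fintype β] [DecidableEq β]
    (assoc : ι → β)
    (R1 Rp : ι → ℝ) (hR1 : ∀ u, 0 < R1 u) (hRp : ∀ u, 0 < Rp u)
    (Feas : (ι → ℝ) → (ι → ℝ) → Prop)
    (hFeas : ∀ θ γ, Feas θ γ ↔ ((∀ u, 0 ≤ θ u) ∧ (∀ u, 0 ≤ γ u) ∧
      (∑ u, θ u) ≤ 1 ∧
      (∀ b : β, (∑ u ∈ Finset.univ.filter (fun u => assoc u = b), γ u) ≤ 1) ∧
      ∀ u, 0 < R1 u * θ u + Rp u * γ u))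
    (obj : (ι → ℝ) → (ι → ℝ) → ℝ)
    (hobj : ∀ θ γ, obj θ γ = ∑ u, Real.log (R1 u * θ u + Rp u * γ u))
    (M Mo : ℝ)
    (hM : IsGreatest {v : ℝ | ∃ θ γ, Feas θ γ ∧ v = obj θ γ} M)
    (hone : ∀ θ γ, Feas θ γ → obj θ γ = M →
      ∀ b : β, ∀ u v : ι, assoc u = b → assoc v = b →
        0 < θ u → 0 < γ u → 0 < θ v → 0 < γ v → u = v)
    (hMo : IsGreatest {v : ℝ | ∃ θ γ, Feas θ γ ∧ (∀ u, θ u * γ u = 0) ∧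
      v = obj θ γ} Mo) :
    M - Mo ≤ (min (Fintype.card β) (Fintype.card ι) : ℝ) * Real.log 2 := by
  classical
  obtain ⟨⟨θ, γ, hF, hMeq⟩, _⟩ := hM
  have hfeas := (hFeas θ γ).mp hF
  obtain ⟨hθ, hγ, hθsum, hγsum, hpos⟩ := hfeas
  set θ' : ι → ℝ := fun u => if Rp u * γ u ≤ R1 u * θ u then θ u else 0 with hθ'
  set γ' : ι → ℝ := fun u => if Rp u * γ u ≤ R1 u * θ u then 0 else γ u with hγ'
  have hθ'le : ∀ u, θ' u ≤ θ u := by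
    intro u; simp only [hθ']; split <;> [exact le_refl _; exact hθ u]
  have hγ'le : ∀ u, γ' u ≤ γ u := by
    intro u; simp only [hγ']; split <;> [exact hγ u; exact le_refl _]
  have hval : ∀ u, R1 u * θ' u + Rp u * γ' u =
      if Rp u * γ u ≤ R1 u * θ u then R1 u * θ u else Rp u * γ u := by
    intro u; simp only [hθ', hγ']; split <;> simp
  have hval_pos : ∀ u, 0 < R1 u * θ' u + Rp u * γ' u := by
    intro u
    have ha : 0 ≤ R1 u * θ u := mul_nonneg (hR1 u).le (hθ u)
    have hc : 0 ≤ Rp u * γ u := mul_nonneg (hRp u).le (hγ u)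
    rw [hval u]
    split_ifs with h
    · nlinarith [hpos u]
    · linarith [not_le.mp h]
  have hF' : Feas θ' γ' := by
    rw [hFeas]
    refine ⟨?_, ?_, ?_, ?_, hval_pos⟩
    · intro u; simp only [hθ']; split <;> [exact hθ u; exact le_refl _]
    · intro u; simp only [hγ']; split <;> [exact le_refl _; exact hγ u]
    · exact le_trans (Finset.sum_le_sum fun u _ => hθ'le u) hθsum
    · intro b
      exact le_trans (Finset.sum_le_sum fun u _ => hγ'le u) (hγsum b)
  have horth : ∀ u, θ' u * γ' u = 0 := by
    intro u; simp only [hθ', hγ']; split <;> simp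
  have hMo' : obj θ' γ' ≤ Mo := hMo.2 ⟨θ', γ', hF', horth, rfl⟩
  -- set of split users
  set S : Finset ι := Finset.univ.filter (fun u => 0 < θ u ∧ 0 < γ u) with hS
  have hSinj : Set.InjOn assoc S := by
    intro u hu v hv huv
    simp only [hS, Finset.coe_filter, Set.mem_setOf_eq] at hu hv
    exact hone θ γ hF hMeq.symm (assoc u) u v rfl huv.symm hu.2.1 hu.2.2 hv.2.1 hv.2.2
  have hScardβ : S.card ≤ Fintype.card β := by
    have := Finset.card_le_card_of_injOn assoc (fun u _ => Finset.mem_univ (assoc u)) hSinj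
    simpa using this
  have hScardι : S.card ≤ Fintype.card ι := Finset.card_le_univ S
  have hlog2 : (0:ℝ) ≤ Real.log 2 := Real.log_nonneg (by norm_num)
  -- per user inequality
  have key : ∀ u, Real.log (R1 u * θ u + Rp u * γ u) ≤
      Real.log (R1 u * θ' u + Rp u * γ' u) + (if u ∈ S then Real.log 2 else 0) := by
    intro u
    have ha : 0 ≤ R1 u * θ u := mul_nonneg (hR1 u).le (hθ u)
    have hc : 0 ≤ Rp u * γ u := mul_nonneg (hRp u).le (hγ u)
    by_cases huS : u ∈ S
    · simp only [huS, if_pos]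
      have hθu : 0 < θ u := by
        simp only [hS, Finset.mem_filter] at huS; exact huS.2.1
      have hγu : 0 < γ u := by
        simp only [hS, Finset.mem_filter] at huS; exact huS.2.2
      have hle : R1 u * θ u + Rp u * γ u ≤ 2 * (R1 u * θ' u + Rp u * γ' u) := by
        rw [hval u]; split_ifs with h
        · linarith
        · linarith [not_le.mp h]
      calc Real.log (R1 u * θ u + Rp u * γ u)
          ≤ Real.log (2 * (R1 u * θ' u + Rp u * γ' u)) :=
            Real.log_le_log (hpos u) hle
        _ = Real.log 2 + Real.log (R1 u * θ' u + Rp u * γ' u) :=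
            Real.log_mul (by norm_num) (hval_pos u).ne'
        _ = _ := by ring
    · simp only [huS, if_neg, not_false_iff, add_zero]
      have : R1 u * θ u + Rp u * γ u = R1 u * θ' u + Rp u * γ' u := by
        simp only [hS, Finset.mem_filter, Finset.mem_univ, true_and, not_and] at huS
        rw [hval u]
        rcases lt_or_eq_of_le (hθ u) with hθu | hθu
        · have hγu : γ u = 0 := le_antisymm (le_of_not_gt (huS hθu)) (hγ u)
          rw [hγu]; simp [mul_nonneg (hR1 u).le (hθ u)]
        · have h0 : R1 u * θ u = 0 := by rw [← hθu]; ring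
          have hrg : 0 < Rp u * γ u := by linarith [hpos u]
          have hcond : ¬ Rp u * γ u ≤ R1 u * θ u := by rw [h0]; exact not_le.mpr hrg
          rw [if_neg hcond, h0, zero_add]
      rw [this]
  have hsum : obj θ γ ≤ obj θ' γ' + S.card * Real.log 2 := by
    rw [hobj, hobj]
    calc (∑ u, Real.log (R1 u * θ u + Rp u * γ u))
        ≤ ∑ u, (Real.log (R1 u * θ' u + Rp u * γ' u) + (if u ∈ S then Real.log 2 else 0)) :=
          Finset.sum_le_sum fun u _ => key u
      _ = (∑ u, Real.log (R1 u * θ' u + Rp u * γ' u)) + ∑ u, (if u ∈ S then Real.log 2 else 0) :=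
          Finset.sum_add_distrib
      _ = (∑ u, Real.log (R1 u * θ' u + Rp u * γ' u)) + S.card * Real.log 2 := by
          rw [Finset.sum_ite_mem, Finset.univ_inter, Finset.sum_const, nsmul_eq_mul]
  have hcast : (S.card : ℝ) ≤ (min (Fintype.card β) (Fintype.card ι) : ℝ) := by
    have : S.card ≤ min (Fintype.card β) (Fintype.card ι) := le_min hScardβ hScardι
    exact_mod_cast this
  have := mul_le_mul_of_nonneg_right hcast hlog2
  have hobjM : M = obj θ γ := hMeq
  nlinarith [hMo', hsum]
end
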